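/- Let A be a graded-commutative algebra (the forms) and let d, i_φ be operators with d of degree +1 and i_φ of degree 0 in total degree, satisfying the recursion d(i_φ^k η) = k i_φ^{k-1} d(i_φ η) - (k-1) i_φ^k dη - (k(k-1)/2) i_φ^{k-2} i_{[φ,φ]} η for all k ≥ 2 and all η, together with the k=0,1 base identities. Then e^{-i_φ} ∘ d ∘ e^{i_φ} = d - L_φ - i_{(1/2)[φ,φ]}, where L_φ = -d∘i_φ + i_φ∘d. -/

import Mathlib

open Finset Polynomial

private lemma aux_fact_inv (n i : ℕ) (h : i ≤ n) :
    ((i.factorial:ℂ))⁻¹ * (((n-i).factorial:ℂ))⁻¹ = (n.choose i) * ((n.factorial:ℂ))⁻¹ := by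
  have key := Nat.choose_mul_factorial_mul_factorial h
  have h1 : (i.factorial:ℂ) ≠ 0 := Nat.cast_ne_zero.mpr i.factorial_ne_zero
  have h2 : ((n-i).factorial:ℂ) ≠ 0 := Nat.cast_ne_zero.mpr (n-i).factorial_ne_zero
  have h3 : (n.factorial:ℂ) ≠ 0 := Nat.cast_ne_zero.mpr n.factorial_ne_zero
  have key2 : ((n.choose i : ℂ)) * i.factorial * (n-i).factorial = n.factorial := by
    exact_mod_cast congrArg (fun m : ℕ => (m:ℂ)) key
  have h4 : ((n.choose i:ℕ):ℂ) ≠ 0 := Nat.cast_ne_zero.mpr (Nat.choose_pos h).ne'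
  rw [← key2]
  field_simp

private lemma aux_alt_sum (n : ℕ) :
    ∑ i ∈ range (n+1), ((-1:ℂ)^i * (i.factorial:ℂ)⁻¹ * (((n-i).factorial:ℂ))⁻¹)
      = if n = 0 then 1 else 0 := by
  have h0 : ∀ i ∈ range (n+1),
      ((-1:ℂ)^i * (i.factorial:ℂ)⁻¹ * (((n-i).factorial:ℂ))⁻¹)
        = ((-1:ℂ)^i * (n.choose i)) * ((n.factorial:ℂ))⁻¹ := by
    intro i hi
    rw [mul_assoc, aux_fact_inv n i (by simpa [Nat.lt_succ_iff] using hi)]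
    ring
  rw [Finset.sum_congr rfl h0, ← Finset.sum_mul]
  have h1 : ∑ i ∈ range (n+1), ((-1:ℂ)^i * (n.choose i)) = if n = 0 then 1 else 0 := by
    have := Int.alternating_sum_range_choose (n := n)
    have h2 := congrArg (fun z : ℤ => (z : ℂ)) this
    push_cast at h2
    exact h2
  rw [h1]
  rcases eq_or_ne n 0 with h | h
  · subst h; simp
  · simp [h]

private lemma aux_coeff (N : ℕ) (a : ℕ → ℂ) (n : ℕ) (hn : n < N) :
    ((∑ k ∈ range N, C (a k) * X^k).coeff n) = a n := by
  rw [Polynomial.finset_sum_coeff]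
  simp only [Polynomial.coeff_C_mul, Polynomial.coeff_X_pow]
  rw [Finset.sum_eq_single n]
  · simp
  · intro b _ hb
    simp [Ne.symm hb]
  · intro hmem
    exact absurd (Finset.mem_range.mpr hn) hmem

private lemma aux_exp_mul (N : ℕ) :
    ∃ r : Polynomial ℂ,
      (∑ k ∈ range N, C ((-1:ℂ)^k * (k.factorial:ℂ)⁻¹) * X^k)
        * (∑ k ∈ range N, C ((k.factorial:ℂ)⁻¹) * X^k) = 1 + X^N * r := by
  set q := ∑ k ∈ range N, C ((-1:ℂ)^k * (k.factorial:ℂ)⁻¹) * X^k with hq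
  set p := ∑ k ∈ range N, C ((k.factorial:ℂ)⁻¹) * X^k with hp
  rcases Nat.eq_zero_or_pos N with h0 | h0
  · refine ⟨-1 + q * p, ?_⟩
    subst h0
    simp [hq, hp]
  have hdvd : X^N ∣ (q * p - 1) := by
    rw [Polynomial.X_pow_dvd_iff]
    intro m hm
    rw [Polynomial.coeff_sub, Polynomial.coeff_mul,
      Finset.Nat.sum_antidiagonal_eq_sum_range_succ_mk]
    have hterm : ∀ i ∈ range (m+1), q.coeff i * p.coeff (m - i)
        = (-1:ℂ)^i * (i.factorial:ℂ)⁻¹ * (((m-i).factorial:ℂ))⁻¹ := by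
      intro i hi
      have hi' : i ≤ m := by simpa [Nat.lt_succ_iff] using hi
      rw [hq, hp, aux_coeff N _ i (lt_of_le_of_lt hi' hm),
        aux_coeff N _ (m - i) (lt_of_le_of_lt (Nat.sub_le m i) hm)]
    rw [Finset.sum_congr rfl hterm, aux_alt_sum m, Polynomial.coeff_one]
    split <;> simp_all
  obtain ⟨r, hr⟩ := hdvd
  exact ⟨r, by linear_combination hr⟩

/-- Abstract version of Proposition 2.5: if `d` and the nilpotent contraction `i_φ` satisfy
the inductive identities `d(i_φ^k η) = k i_φ^{k-1} d(i_φ η) - (k-1) i_φ^k dη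
- (k(k-1)/2) i_φ^{k-2} i_{[φ,φ]} η`, then `e^{-i_φ} ∘ d ∘ e^{i_φ} = d - L_φ - (1/2) i_{[φ,φ]}`
where `L_φ = -d ∘ i_φ + i_φ ∘ d`. -/
theorem stmt_10 {A : Type*} [AddCommGroup A] [Module ℂ A]
    (d iφ ibr : Module.End ℂ A) (N : ℕ) (hnil : iφ ^ N = 0)
    (hrec : ∀ k : ℕ, 2 ≤ k →
      d * iφ ^ k = (k : ℂ) • (iφ ^ (k - 1) * (d * iφ)) - ((k : ℂ) - 1) • (iφ ^ k * d)
        - ((k : ℂ) * ((k : ℂ) - 1) / 2) • (iφ ^ (k - 2) * ibr))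
    (E E' : Module.End ℂ A)
    (hE : E = ∑ k ∈ Finset.range N, (k.factorial : ℂ)⁻¹ • iφ ^ k)
    (hE' : E' = ∑ k ∈ Finset.range N, (k.factorial : ℂ)⁻¹ • (-iφ) ^ k)
    (L : Module.End ℂ A) (hL : L = -(d * iφ) + iφ * d) :
    E' * d * E = d - L - (2 : ℂ)⁻¹ • ibr := by
  -- trivial case N = 0 : the ring of endomorphisms is trivial
  rcases Nat.eq_zero_or_pos N with hN0 | hN0
  · subst hN0
    rw [pow_zero] at hnil
    have h0 : ∀ x : Module.End ℂ A, x = 0 := fun x => by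
      calc x = 1 * x := (one_mul x).symm
      _ = 0 := by rw [hnil, zero_mul]
    rw [h0 (E' * d * E), h0 (d - L - (2:ℂ)⁻¹ • ibr)]
  -- nilpotency beyond N
  have hz : ∀ m, N ≤ m → iφ ^ m = 0 := by
    intro m hm
    obtain ⟨t, rfl⟩ := Nat.exists_eq_add_of_le hm
    rw [pow_add, hnil, zero_mul]
  -- the coefficient function
  set c : ℕ → ℂ := fun k => (k.factorial : ℂ)⁻¹ with hc
  have fact_ne : ∀ k : ℕ, (k.factorial : ℂ) ≠ 0 :=
    fun k => Nat.cast_ne_zero.mpr k.factorial_ne_zero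
  -- `E' * E = 1` via the polynomial identity
  have hE'2 : E' = ∑ k ∈ Finset.range N, ((-1:ℂ)^k * c k) • iφ ^ k := by
    rw [hE']
    refine Finset.sum_congr rfl fun k _ => ?_
    rw [show -iφ = (-1:ℂ) • iφ by simp, _root_.smul_pow, smul_smul, mul_comm]
  have hEE : E' * E = 1 := by
    obtain ⟨r, hr⟩ := aux_exp_mul N
    have h := congrArg (Polynomial.aeval iφ) hr
    rw [map_mul, map_add, map_one, map_mul, map_pow, Polynomial.aeval_X] at h
    have hqq : (Polynomial.aeval iφ)
        (∑ k ∈ range N, C ((-1:ℂ)^k * (k.factorial:ℂ)⁻¹) * X^k) = E' := by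
      rw [hE'2, map_sum]
      refine Finset.sum_congr rfl fun k _ => ?_
      rw [map_mul, map_pow, Polynomial.aeval_C, Polynomial.aeval_X, Algebra.smul_def]
    have hpp : (Polynomial.aeval iφ)
        (∑ k ∈ range N, C ((k.factorial:ℂ)⁻¹) * X^k) = E := by
      rw [hE, map_sum]
      refine Finset.sum_congr rfl fun k _ => ?_
      rw [map_mul, map_pow, Polynomial.aeval_C, Polynomial.aeval_X, Algebra.smul_def]
    rw [hqq, hpp, hnil, zero_mul, add_zero] at h
    exact h
  -- extend E to a sum over `range (N+2)`
  have hEM : E = ∑ k ∈ Finset.range (N+2), c k • iφ ^ k := by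
    rw [show N + 2 = (N+1)+1 from rfl, Finset.sum_range_succ, Finset.sum_range_succ,
      hz N le_rfl, hz (N+1) (by omega), hE]
    simp
    rfl
  -- the recursion, valid for all k with truncated subtraction
  have hrec' : ∀ k : ℕ,
      d * iφ ^ k = (k : ℂ) • (iφ ^ (k - 1) * (d * iφ)) - ((k : ℂ) - 1) • (iφ ^ k * d)
        - ((k : ℂ) * ((k : ℂ) - 1) / 2) • (iφ ^ (k - 2) * ibr) := by
    intro k
    match k with
    | 0 => norm_num
    | 1 => norm_num
    | (k+2) => exact hrec (k+2) (by omega)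
  -- coefficient identities
  have hc1 : ∀ j : ℕ, c (j+1) * (((j+1:ℕ)) : ℂ) = c j := by
    intro j
    simp only [hc, Nat.factorial_succ]
    push_cast
    rw [mul_inv, mul_comm ((j:ℂ)+1)⁻¹, mul_assoc,
      inv_mul_cancel₀ (by exact_mod_cast Nat.succ_ne_zero j), mul_one]
  have hc2 : ∀ j : ℕ, c (j+2) * ((((j+2:ℕ)):ℂ) * ((((j+2:ℕ)):ℂ) - 1) / 2) = (2:ℂ)⁻¹ * c j := by
    intro j
    have e1 := hc1 (j+1)
    have e2 := hc1 j
    push_cast at e1 e2 ⊢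
    linear_combination (((j:ℂ)+1)/2) * e1 + (1/2 : ℂ) * e2
  -- the three summation identities
  have k1 : ∀ X : Module.End ℂ A,
      ∑ k ∈ Finset.range (N+2), (c k * (k:ℂ)) • (iφ ^ (k-1) * X)
        = ∑ k ∈ Finset.range (N+2), c k • (iφ ^ k * X) := by
    intro X
    rw [Finset.sum_range_succ' (fun k => (c k * (k:ℂ)) • (iφ ^ (k-1) * X)) (N+1),
      Finset.sum_range_succ (fun k => c k • (iφ ^ k * X)) (N+1)]
    rw [hz (N+1) (by omega)]
    simp only [Nat.cast_zero, mul_zero, zero_smul, add_zero, zero_mul, smul_zero,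
      Nat.add_sub_cancel]
    exact Finset.sum_congr rfl fun j _ => by rw [hc1 j]
  have k2' : ∑ k ∈ Finset.range (N+2), (c k * (k:ℂ)) • (iφ ^ k * d)
      = ∑ k ∈ Finset.range (N+2), c k • (iφ ^ (k+1) * d) := by
    rw [Finset.sum_range_succ' (fun k => (c k * (k:ℂ)) • (iφ ^ k * d)) (N+1),
      Finset.sum_range_succ (fun k => c k • (iφ ^ (k+1) * d)) (N+1)]
    rw [hz (N+1+1) (by omega)]
    simp only [Nat.cast_zero, mul_zero, zero_smul, add_zero, zero_mul, smul_zero]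
    exact Finset.sum_congr rfl fun j _ => by rw [hc1 j]
  have k3 : ∑ k ∈ Finset.range (N+2), (c k * ((k:ℂ) * ((k:ℂ)-1) / 2)) • (iφ ^ (k-2) * ibr)
      = ∑ k ∈ Finset.range (N+2), ((2:ℂ)⁻¹ * c k) • (iφ ^ k * ibr) := by
    rw [Finset.sum_range_succ'
        (fun k => (c k * ((k:ℂ) * ((k:ℂ)-1) / 2)) • (iφ ^ (k-2) * ibr)) (N+1),
      Finset.sum_range_succ'
        (fun j => (c (j+1) * (((j+1:ℕ):ℂ) * (((j+1:ℕ):ℂ)-1) / 2)) • (iφ ^ (j+1-2) * ibr)) N,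
      Finset.sum_range_succ (fun k => ((2:ℂ)⁻¹ * c k) • (iφ ^ k * ibr)) (N+1),
      Finset.sum_range_succ (fun k => ((2:ℂ)⁻¹ * c k) • (iφ ^ k * ibr)) N]
    rw [hz N le_rfl, hz (N+1) (by omega)]
    norm_num
    refine Finset.sum_congr rfl fun j _ => ?_
    have e1 := hc1 (j+1)
    have e2 := hc1 j
    push_cast at e1 e2
    congr 1
    linear_combination (((j:ℂ)+1)/2) * e1 + (1/2 : ℂ) * e2
  -- multiplication formulas
  have hmulE : ∀ X : Module.End ℂ A,
      E * X = ∑ k ∈ Finset.range (N+2), c k • (iφ ^ k * X) := by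
    intro X
    rw [hEM, Finset.sum_mul]
    exact Finset.sum_congr rfl fun k _ => smul_mul_assoc _ _ _
  have hmulE2 : iφ * E * d = ∑ k ∈ Finset.range (N+2), c k • (iφ ^ (k+1) * d) := by
    rw [hEM, Finset.mul_sum, Finset.sum_mul]
    refine Finset.sum_congr rfl fun k _ => ?_
    rw [mul_smul_comm, smul_mul_assoc, ← pow_succ']
  -- main computation : d * E
  have dE : d * E = E * (d * iφ) + E * d - iφ * E * d - (2:ℂ)⁻¹ • (E * ibr) := by
    conv_lhs => rw [hEM]
    rw [Finset.mul_sum]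
    have step : ∀ k ∈ Finset.range (N+2), d * (c k • iφ ^ k)
        = (c k * (k:ℂ)) • (iφ ^ (k-1) * (d * iφ))
          - ((c k * (k:ℂ)) • (iφ ^ k * d) - c k • (iφ ^ k * d))
          - (c k * ((k:ℂ) * ((k:ℂ)-1) / 2)) • (iφ ^ (k-2) * ibr) := by
      intro k _
      rw [mul_smul_comm, hrec' k, smul_sub, smul_sub, smul_smul, smul_smul, smul_smul,
        mul_sub, mul_one, sub_smul]
    rw [Finset.sum_congr rfl step, Finset.sum_sub_distrib, Finset.sum_sub_distrib,
      Finset.sum_sub_distrib, k1, k2', k3, hmulE (d * iφ), hmulE d, hmulE ibr, hmulE2,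
      Finset.smul_sum]
    have : ∀ k ∈ Finset.range (N+2),
        ((2:ℂ)⁻¹ * c k) • (iφ ^ k * ibr) = (2:ℂ)⁻¹ • (c k • (iφ ^ k * ibr)) := by
      intro k _
      rw [smul_smul]
    rw [Finset.sum_congr rfl this]
    abel
  -- commutation of E with iφ
  have hcomm : E * iφ = iφ * E := by
    rw [hE, Finset.sum_mul, Finset.mul_sum]
    refine Finset.sum_congr rfl fun k _ => ?_
    rw [smul_mul_assoc, mul_smul_comm, ← pow_succ, ← pow_succ']
  -- assemble
  have final : d * E = E * (d + d * iφ - iφ * d - (2:ℂ)⁻¹ • ibr) := by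
    have h5 : E * (iφ * d) = iφ * E * d := by rw [← mul_assoc, hcomm]
    rw [mul_sub, mul_sub, mul_add, mul_smul_comm, h5, dE]
    abel
  calc E' * d * E = E' * (d * E) := by rw [mul_assoc]
    _ = E' * (E * (d + d * iφ - iφ * d - (2:ℂ)⁻¹ • ibr)) := by rw [final]
    _ = (E' * E) * (d + d * iφ - iφ * d - (2:ℂ)⁻¹ • ibr) := by rw [mul_assoc]
    _ = d + d * iφ - iφ * d - (2:ℂ)⁻¹ • ibr := by rw [hEE, one_mul]
    _ = d - L - (2:ℂ)⁻¹ • ibr := by rw [hL]; abel
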